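/- Let g, p ∈ ℝⁿ, let H be a symmetric n×n real matrix, let V be an n×k real matrix whose columns form an orthonormal basis of span{g, p}, and set H̃ = V Vᵀ H V Vᵀ. Define c = (−‖g‖², gᵀp)ᵀ, Q = [[gᵀHg, −pᵀHg], [−pᵀHg, pᵀHp]], G = [[‖g‖², −gᵀp], [−gᵀp, ‖p‖²]], and for α ∈ ℝ² set w(α) = −α₁ g + α₂ p. Suppose α* ∈ ℝ², λ ≥ 0 and Δ > 0 satisfy (Q + λG)α* + c = 0, Q + λG is positive semidefinite, and λ(Δ² − (α*)ᵀG α*) = 0. Then d = w(α*) satisfies (H̃ + λI)d + g = 0, H̃ + λI is positive semidefinite, and λ(Δ − ‖d‖) = 0. -/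

import Mathlib

open RealInnerProductSpace Matrix

private lemma sq_eq_of_sq_eq_sq {a b : ℝ} (h : a ^ 2 = b ^ 2) (ha : 0 ≤ a) (hb : 0 < b) :
    a = b := by nlinarith

set_option maxHeartbeats 1000000 in

theorem drtr_kkt_to_fullscale_kkt {n k : ℕ}
    (g p : EuclideanSpace ℝ (Fin n))
    (H : Matrix (Fin n) (Fin n) ℝ) (hH : H.IsSymm)
    (V : Matrix (Fin n) (Fin k) ℝ)
    (hVorth : Vᵀ * V = 1)
    (hVspan : LinearMap.range (Matrix.toEuclideanLin V) = Submodule.span ℝ {g, p})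
    (Htil : Matrix (Fin n) (Fin n) ℝ) (hHtil : Htil = V * Vᵀ * H * V * Vᵀ)
    (c : Fin 2 → ℝ) (hc : c = ![-(‖g‖ ^ 2), ⟪g, p⟫])
    (Q : Matrix (Fin 2) (Fin 2) ℝ)
    (hQ : Q = !![⟪g, Matrix.toEuclideanLin H g⟫, -⟪p, Matrix.toEuclideanLin H g⟫;
                 -⟪p, Matrix.toEuclideanLin H g⟫, ⟪p, Matrix.toEuclideanLin H p⟫])
    (G : Matrix (Fin 2) (Fin 2) ℝ)
    (hG : G = !![‖g‖ ^ 2, -⟪g, p⟫; -⟪g, p⟫, ‖p‖ ^ 2])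
    (αstar : Fin 2 → ℝ) (lam Δ : ℝ) (hlam : 0 ≤ lam) (hΔ : 0 < Δ)
    (hstat : (Q + lam • G).mulVec αstar + c = 0)
    (hpsd : (Q + lam • G).PosSemidef)
    (hcomp : lam * (Δ ^ 2 - αstar ⬝ᵥ G.mulVec αstar) = 0)
    (d : EuclideanSpace ℝ (Fin n)) (hd : d = -(αstar 0) • g + (αstar 1) • p) :
    Matrix.toEuclideanLin Htil d + lam • d + g = 0 ∧
    (Htil + lam • (1 : Matrix (Fin n) (Fin n) ℝ)).PosSemidef ∧
    lam * (Δ - ‖d‖) = 0 := by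
  classical
  set g' : Fin n → ℝ := WithLp.equiv 2 (Fin n → ℝ) g with hg'
  set p' : Fin n → ℝ := WithLp.equiv 2 (Fin n → ℝ) p with hp'
  set d' : Fin n → ℝ := WithLp.equiv 2 (Fin n → ℝ) d with hd'def
  set α0 : ℝ := αstar 0 with hα0
  set α1 : ℝ := αstar 1 with hα1
  have hd' : d' = -α0 • g' + α1 • p' := congrArg (WithLp.equiv 2 (Fin n → ℝ)) hd
  -- scalar abbreviations
  have hgg : ‖g‖ ^ 2 = g' ⬝ᵥ g' := by rw [← real_inner_self_eq_norm_sq]; rfl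
  have hpp : ‖p‖ ^ 2 = p' ⬝ᵥ p' := by rw [← real_inner_self_eq_norm_sq]; rfl
  have hgp : ⟪g, p⟫ = g' ⬝ᵥ p' := by rw [dotProduct_comm]; rfl
  have hgHg : ⟪g, Matrix.toEuclideanLin H g⟫ = g' ⬝ᵥ (H *ᵥ g') := by rw [dotProduct_comm]; rfl
  have hpHg : ⟪p, Matrix.toEuclideanLin H g⟫ = p' ⬝ᵥ (H *ᵥ g') := by rw [dotProduct_comm]; rfl
  have hpHp : ⟪p, Matrix.toEuclideanLin H p⟫ = p' ⬝ᵥ (H *ᵥ p') := by rw [dotProduct_comm]; rfl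
  rw [hgg, hgp] at hc
  rw [hgHg, hpHg, hpHp] at hQ
  rw [hgg, hgp, hpp] at hG
  -- symmetry of H
  have hHsymm : g' ⬝ᵥ (H *ᵥ p') = p' ⬝ᵥ (H *ᵥ g') := by
    rw [dotProduct_comm p', dotProduct_mulVec, ← hH.eq, vecMul_transpose, hH.eq, dotProduct_comm]
  have hcomm : p' ⬝ᵥ g' = g' ⬝ᵥ p' := dotProduct_comm _ _
  -- span facts in plain land
  have hgmem : ∃ y : Fin k → ℝ, V *ᵥ y = g' := by
    have hmem : g ∈ Submodule.span ℝ ({g, p} : Set (EuclideanSpace ℝ (Fin n))) :=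
      Submodule.subset_span (by simp)
    rw [← hVspan] at hmem
    obtain ⟨y, hy⟩ := hmem
    exact ⟨WithLp.equiv 2 (Fin k → ℝ) y, congrArg (WithLp.equiv 2 (Fin n → ℝ)) hy⟩
  have hpmem : ∃ y : Fin k → ℝ, V *ᵥ y = p' := by
    have hmem : p ∈ Submodule.span ℝ ({g, p} : Set (EuclideanSpace ℝ (Fin n))) :=
      Submodule.subset_span (by simp)
    rw [← hVspan] at hmem
    obtain ⟨y, hy⟩ := hmem
    exact ⟨WithLp.equiv 2 (Fin k → ℝ) y, congrArg (WithLp.equiv 2 (Fin n → ℝ)) hy⟩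
  have hrange : ∀ y : Fin k → ℝ, ∃ a b : ℝ, V *ᵥ y = a • g' + b • p' := by
    intro y
    have hmem : Matrix.toEuclideanLin V ((WithLp.equiv 2 (Fin k → ℝ)).symm y) ∈
        Submodule.span ℝ ({g, p} : Set (EuclideanSpace ℝ (Fin n))) := by
      rw [← hVspan]; exact LinearMap.mem_range_self _ _
    rw [Submodule.mem_span_pair] at hmem
    obtain ⟨a, b, hab⟩ := hmem
    exact ⟨a, b, (congrArg (WithLp.equiv 2 (Fin n → ℝ)) hab).symm⟩
  -- projection facts
  set P : Matrix (Fin n) (Fin n) ℝ := V * Vᵀ with hP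
  have hPsym : Pᵀ = P := by rw [hP, transpose_mul, transpose_transpose]
  have hPV : P * V = V := by rw [hP, Matrix.mul_assoc, hVorth, Matrix.mul_one]
  have hPP : P * P = P := by rw [hP, Matrix.mul_assoc, ← Matrix.mul_assoc Vᵀ V Vᵀ,
    hVorth, Matrix.one_mul]
  have hPfix : ∀ y : Fin k → ℝ, P *ᵥ (V *ᵥ y) = V *ᵥ y := fun y => by
    rw [mulVec_mulVec, hPV]
  have hPg : P *ᵥ g' = g' := by obtain ⟨y, hy⟩ := hgmem; rw [← hy, hPfix]
  have hPp : P *ᵥ p' = p' := by obtain ⟨y, hy⟩ := hpmem; rw [← hy, hPfix]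
  have hPd : P *ᵥ d' = d' := by
    rw [hd', mulVec_add, mulVec_smul, mulVec_smul, hPg, hPp]
  -- entry values
  have hQ00 : Q 0 0 = g' ⬝ᵥ (H *ᵥ g') := by rw [hQ]; simp
  have hQ01 : Q 0 1 = -(p' ⬝ᵥ (H *ᵥ g')) := by rw [hQ]; simp
  have hQ10 : Q 1 0 = -(p' ⬝ᵥ (H *ᵥ g')) := by rw [hQ]; simp
  have hQ11 : Q 1 1 = p' ⬝ᵥ (H *ᵥ p') := by rw [hQ]; simp
  have hG00 : G 0 0 = g' ⬝ᵥ g' := by rw [hG]; simp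
  have hG01 : G 0 1 = -(g' ⬝ᵥ p') := by rw [hG]; simp
  have hG10 : G 1 0 = -(g' ⬝ᵥ p') := by rw [hG]; simp
  have hG11 : G 1 1 = p' ⬝ᵥ p' := by rw [hG]; simp
  have hc0 : c 0 = -(g' ⬝ᵥ g') := by rw [hc]; simp
  have hc1 : c 1 = g' ⬝ᵥ p' := by rw [hc]; simp
  -- scalar stationarity equations
  have e0 := congrFun hstat 0
  have e1 := congrFun hstat 1
  simp only [Pi.add_apply, Matrix.mulVec, dotProduct, Fin.sum_univ_two,
    Matrix.add_apply, Matrix.smul_apply, smul_eq_mul, Pi.zero_apply] at e0 e1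
  rw [hQ00, hQ01, hG00, hG01, hc0] at e0
  rw [hQ10, hQ11, hG10, hG11, hc1] at e1
  -- the residual vector
  set z : Fin n → ℝ := H *ᵥ d' + lam • d' + g' with hz
  have hgz : g' ⬝ᵥ z = 0 := by
    rw [hz, hd']
    simp only [dotProduct_add, dotProduct_smul, mulVec_add, mulVec_smul, add_smul, neg_smul,
      dotProduct_neg, smul_eq_mul, hHsymm, hcomm, mulVec_neg, neg_dotProduct]
    linear_combination -e0
  have hpz : p' ⬝ᵥ z = 0 := by
    rw [hz, hd']
    simp only [dotProduct_add, dotProduct_smul, mulVec_add, mulVec_smul, add_smul, neg_smul,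
      dotProduct_neg, smul_eq_mul, hHsymm, hcomm, mulVec_neg, neg_dotProduct]
    linear_combination e1
  have hfact : Htil = P * (H * P) := by
    rw [hHtil, hP]; simp only [Matrix.mul_assoc]
  have hstep : ∀ w : Fin n → ℝ, P *ᵥ (H *ᵥ (P *ᵥ w)) = Htil *ᵥ w := fun w => by
    rw [mulVec_mulVec, mulVec_mulVec, hfact, Matrix.mul_assoc]
  have hHtilsym : Htilᵀ = Htil := by
    rw [hfact]
    simp only [Matrix.transpose_mul, hPsym, hH.eq, Matrix.mul_assoc]
  have hPz : P *ᵥ z = 0 := by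
    set u : Fin n → ℝ := P *ᵥ z with hu
    obtain ⟨a, b, hab⟩ := hrange (Vᵀ *ᵥ z)
    have huab : u = a • g' + b • p' := by
      rw [hu, hP, ← mulVec_mulVec, hab]
    have hzu : z ⬝ᵥ u = 0 := by
      rw [huab, dotProduct_add, dotProduct_smul, dotProduct_smul,
        dotProduct_comm z g', dotProduct_comm z p', hgz, hpz]
      simp
    have h1 : z ⬝ᵥ (P *ᵥ u) = u ⬝ᵥ u := by
      rw [dotProduct_mulVec, ← mulVec_transpose, hPsym, ← hu]
    have h2 : P *ᵥ u = u := by rw [hu, mulVec_mulVec, hPP]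
    have huu : u ⬝ᵥ u = 0 := by rw [← h1, h2, hzu]
    exact dotProduct_self_eq_zero.mp huu
  refine ⟨?_, Matrix.PosSemidef.of_dotProduct_mulVec_nonneg ?_ ?_, ?_⟩
  · -- stationarity
    refine (WithLp.equiv 2 (Fin n → ℝ)).injective ?_
    show Htil *ᵥ d' + lam • d' + g' = WithLp.equiv 2 (Fin n → ℝ) 0
    rw [show Htil *ᵥ d' = P *ᵥ (H *ᵥ d') from by rw [← hstep, hPd], show lam • d' = P *ᵥ (lam • d') by rw [mulVec_smul, hPd],
      show g' = P *ᵥ g' from hPg.symm, ← mulVec_add, ← mulVec_add, ← hz, hPz]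
    rfl
  · -- Hermitian
    show (Htil + lam • 1)ᴴ = Htil + lam • 1
    rw [Matrix.conjTranspose_eq_transpose_of_trivial, Matrix.transpose_add,
      Matrix.transpose_smul, Matrix.transpose_one, hHtilsym]
  · -- quadratic form nonneg
    intro x
    set u : Fin n → ℝ := P *ᵥ x with hu
    obtain ⟨a, b, hab⟩ := hrange (Vᵀ *ᵥ x)
    have huab : u = a • g' + b • p' := by rw [hu, hP, ← mulVec_mulVec, hab]
    have hxu : x ⬝ᵥ u = u ⬝ᵥ u := by
      have h1 : x ⬝ᵥ (P *ᵥ u) = u ⬝ᵥ u := by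
        rw [dotProduct_mulVec, ← mulVec_transpose, hPsym, ← hu]
      have h2 : P *ᵥ u = u := by rw [hu, mulVec_mulVec, hPP]
      rw [← h1, h2]
    have hule : u ⬝ᵥ u ≤ x ⬝ᵥ x := by
      have h0 : 0 ≤ (x - u) ⬝ᵥ (x - u) :=
        Finset.sum_nonneg fun i _ => mul_self_nonneg _
      have hux : u ⬝ᵥ x = x ⬝ᵥ u := dotProduct_comm _ _
      rw [sub_dotProduct, dotProduct_sub, dotProduct_sub] at h0
      linarith [hxu, hux]
    have hquad : x ⬝ᵥ (Htil *ᵥ x) = u ⬝ᵥ (H *ᵥ u) := by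
      rw [← hstep, ← hu, dotProduct_mulVec, ← mulVec_transpose, hPsym, ← hu]
    have hpsd2 := hpsd.dotProduct_mulVec_nonneg ![-a, b]
    simp only [star_trivial, Pi.add_apply, Matrix.mulVec, dotProduct, Fin.sum_univ_two,
      Matrix.add_apply, Matrix.smul_apply, smul_eq_mul, Matrix.cons_val_zero,
      Matrix.cons_val_one, Matrix.head_cons] at hpsd2
    rw [hQ00, hQ01, hQ10, hQ11, hG00, hG01, hG10, hG11] at hpsd2
    have huHu : u ⬝ᵥ (H *ᵥ u) + lam * (u ⬝ᵥ u) ≥ 0 := by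
      rw [huab]
      simp only [dotProduct_add, add_dotProduct, dotProduct_smul, smul_dotProduct,
        mulVec_add, mulVec_smul, smul_eq_mul, hHsymm, hcomm]
      nlinarith [hpsd2]
    show 0 ≤ star x ⬝ᵥ (Htil + lam • 1) *ᵥ x
    rw [star_trivial, add_mulVec, smul_mulVec, one_mulVec, dotProduct_add,
      dotProduct_smul, smul_eq_mul]
    nlinarith [hquad, hule, huHu, hlam, mul_le_mul_of_nonneg_left hule hlam]
  · -- complementarity
    have hdd' : d' ⬝ᵥ d' = α0^2 * (g' ⬝ᵥ g') - 2*α0*α1*(g' ⬝ᵥ p') + α1^2 * (p' ⬝ᵥ p') := by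
      rw [hd']
      simp only [dotProduct_add, add_dotProduct, dotProduct_smul, smul_dotProduct,
        smul_eq_mul, hcomm, neg_smul, neg_dotProduct, dotProduct_neg]
      ring
    have hdd : αstar ⬝ᵥ G *ᵥ αstar = d' ⬝ᵥ d' := by
      have hexp : αstar ⬝ᵥ G *ᵥ αstar =
          (G 0 0 * α0 + G 0 1 * α1) * α0 + (G 1 0 * α0 + G 1 1 * α1) * α1 := by
        simp only [Matrix.mulVec, dotProduct, Fin.sum_univ_two]
        ring
      rw [hexp, hG00, hG01, hG10, hG11, hdd']
      ring
    rw [hdd] at hcomp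
    rcases eq_or_lt_of_le hlam with h | h
    · rw [← h]; ring
    · have h2 : Δ ^ 2 = d' ⬝ᵥ d' := by
        have := mul_eq_zero.mp hcomp
        rcases this with h' | h'
        · exact absurd h'.symm (ne_of_lt h)
        · linarith
      have hnorm : ‖d‖ ^ 2 = d' ⬝ᵥ d' := by rw [← real_inner_self_eq_norm_sq]; rfl
      have : ‖d‖ = Δ :=
        sq_eq_of_sq_eq_sq (by rw [hnorm, h2]) (norm_nonneg d) hΔ
      rw [this]; ring
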